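/- Suppose the symmetric positive definite matrices A_k (k = 1,…,K) and smoothers S_k = ωD_k^{-1} satisfy: (i) (ω/λ_max(A_k))(v,v) ≤ (S_k v, v) ≤ (A_k^{-1} v, v) for all v, and (ii) ‖T^k v‖²_{A_k} ≤ m_0 ‖A_k v‖²_{D_k^{-1}} for all v, where T^k is the Galerkin coarse-grid correction. Then the V-cycle operator B_k with l pre- and post-smoothing steps satisfies ‖I - B_k A_k‖_{A_k} ≤ m_0/(2lω + m_0) < 1 for all 1 ≤ k ≤ K. -/

import Mathlib

open Matrix

set_option linter.unusedSectionVars false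
set_option maxHeartbeats 2000000

open Polynomial Finset

section MGaux
variable {m n : Type*} [Fintype m] [Fintype n] [DecidableEq m] [DecidableEq n]

private lemma conj_dot (X : Matrix m n ℝ) (Y : Matrix m m ℝ) (v : n → ℝ) :
    ((Xᵀ * Y * X) *ᵥ v) ⬝ᵥ v = (Y *ᵥ (X *ᵥ v)) ⬝ᵥ (X *ᵥ v) := by
  rw [Matrix.mul_assoc, ← mulVec_mulVec, ← mulVec_mulVec, dotProduct_comm,
    dotProduct_mulVec, vecMul_transpose, dotProduct_comm]

private lemma cs_aux (M : Matrix n n ℝ) (hsym : Mᵀ = M)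
    (hpsd : ∀ v : n → ℝ, 0 ≤ (M *ᵥ v) ⬝ᵥ v) (u w : n → ℝ) :
    ((M *ᵥ u) ⬝ᵥ w) ^ 2 ≤ ((M *ᵥ u) ⬝ᵥ u) * ((M *ᵥ w) ⬝ᵥ w) := by
  have key : ∀ t : ℝ, 0 ≤ ((M *ᵥ w) ⬝ᵥ w) * (t * t) + (2 * ((M *ᵥ u) ⬝ᵥ w)) * t
      + ((M *ᵥ u) ⬝ᵥ u) := by
    intro t
    have h := hpsd (u + t • w)
    have hswap : (M *ᵥ w) ⬝ᵥ u = (M *ᵥ u) ⬝ᵥ w := by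
      rw [dotProduct_comm, dotProduct_mulVec, ← mulVec_transpose, hsym]
    simp only [mulVec_add, mulVec_smul, add_dotProduct, smul_dotProduct,
      dotProduct_add, dotProduct_smul, smul_eq_mul, hswap] at h
    nlinarith [h]
  have := discrim_le_zero key
  rw [discrim] at this
  nlinarith [this]

private lemma mulVec_dot_left (M : Matrix n n ℝ) (x y : n → ℝ) :
    (M *ᵥ x) ⬝ᵥ y = x ⬝ᵥ (Mᵀ *ᵥ y) := by
  rw [dotProduct_comm, dotProduct_mulVec, ← mulVec_transpose, dotProduct_comm]

private lemma sqrt_facts (A1 : Matrix n n ℝ) (ω : ℝ) (hω : 0 < ω) (hdp : ∀ i, 0 < A1 i i) :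
    ((diagonal fun i => Real.sqrt (ω * (A1 i i)⁻¹))ᵀ = diagonal fun i => Real.sqrt (ω * (A1 i i)⁻¹)) ∧
    ((diagonal fun i => (Real.sqrt (ω * (A1 i i)⁻¹))⁻¹)ᵀ = diagonal fun i => (Real.sqrt (ω * (A1 i i)⁻¹))⁻¹) ∧
    (diagonal fun i => Real.sqrt (ω * (A1 i i)⁻¹)) * (diagonal fun i => (Real.sqrt (ω * (A1 i i)⁻¹))⁻¹) = 1 ∧
    (diagonal fun i => (Real.sqrt (ω * (A1 i i)⁻¹))⁻¹) * (diagonal fun i => Real.sqrt (ω * (A1 i i)⁻¹)) = 1 ∧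
    (diagonal fun i => Real.sqrt (ω * (A1 i i)⁻¹)) * (diagonal fun i => Real.sqrt (ω * (A1 i i)⁻¹)) = ω • (diagonal fun i => (A1 i i)⁻¹) := by
  have hne : ∀ i, Real.sqrt (ω * (A1 i i)⁻¹) ≠ 0 := fun i =>
    (Real.sqrt_pos.mpr (by have := hdp i; positivity)).ne'
  refine ⟨diagonal_transpose _, diagonal_transpose _, ?_, ?_, ?_⟩
  · rw [diagonal_mul_diagonal,
      show (fun i => Real.sqrt (ω * (A1 i i)⁻¹) * (Real.sqrt (ω * (A1 i i)⁻¹))⁻¹) = fun _ : n => (1:ℝ)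
        from funext fun i => mul_inv_cancel₀ (hne i), diagonal_one]
  · rw [diagonal_mul_diagonal,
      show (fun i => (Real.sqrt (ω * (A1 i i)⁻¹))⁻¹ * Real.sqrt (ω * (A1 i i)⁻¹)) = fun _ : n => (1:ℝ)
        from funext fun i => inv_mul_cancel₀ (hne i), diagonal_one]
  · rw [diagonal_mul_diagonal, ← diagonal_smul,
      show (fun i => Real.sqrt (ω * (A1 i i)⁻¹) * Real.sqrt (ω * (A1 i i)⁻¹)) = ω • fun i : n => (A1 i i)⁻¹
        from funext fun i => by
          have := hdp i
          rw [Real.mul_self_sqrt (by positivity)]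
          simp [smul_eq_mul]]
private lemma diag_pos (A : Matrix n n ℝ) (hA : A.PosDef) (i : n) : 0 < A i i := by
  have h := hA.dotProduct_mulVec_pos (x := Pi.single i 1) (fun h => by simpa using congrFun h i)
  simpa [mulVec_single, single_dotProduct] using h

private lemma mg_conj_pow (R Ri M : Matrix n n ℝ) (h1 : R * Ri = 1) (h2 : Ri * R = 1) (j : ℕ) :
    (R * M * Ri) ^ j = R * M ^ j * Ri := by
  induction j with
  | zero => simpa using h1.symm
  | succ k ih =>
    rw [pow_succ, pow_succ, ih]
    simp only [Matrix.mul_assoc]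
    rw [← Matrix.mul_assoc Ri R, h2, Matrix.one_mul]

private lemma psd_dot (A : Matrix n n ℝ) (hA : A.PosDef) (x : n → ℝ) : 0 ≤ (A *ᵥ x) ⬝ᵥ x := by
  have := hA.posSemidef.dotProduct_mulVec_nonneg x
  simpa [dotProduct_comm] using this

private lemma poly_id (nn : ℕ) :
    (X : ℝ[X]) - X * (1 - X) ^ nn - (nn : ℝ[X]) * (X ^ 2 * (1 - X) ^ nn) =
      ∑ m ∈ range nn, ((m : ℝ[X]) + 1) * (X ^ 3 * (1 - X) ^ m) := by
  induction nn with
  | zero => simp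
  | succ k ih =>
    rw [Finset.sum_range_succ, ← ih]
    push_cast
    ring

private lemma matrix_id (H : Matrix n n ℝ) (nn : ℕ) :
    H - H * (1 - H) ^ nn - (nn : Matrix n n ℝ) * (H ^ 2 * (1 - H) ^ nn) =
      ∑ m ∈ range nn, ((m : Matrix n n ℝ) + 1) * (H ^ 3 * (1 - H) ^ m) := by
  have h := congrArg (Polynomial.aeval H) (poly_id nn)
  simpa only [map_sub, _root_.map_mul, map_add, map_pow, _root_.map_one, map_natCast, aeval_X,
    map_sum] using h

private lemma aux_sandwich (H : Matrix n n ℝ) (hH : Hᵀ = H) (Y : Matrix n n ℝ)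
    (hY : ∀ w : n → ℝ, 0 ≤ (Y *ᵥ w) ⬝ᵥ w) (r : ℕ) (p : ℝ[X]) (hp : Y = aeval H p)
    (q : ℝ[X]) (hq : q = (X * (1 - X) ^ r) * p * (X * (1 - X) ^ r)) (v : n → ℝ) :
    0 ≤ ((aeval H q) *ᵥ v) ⬝ᵥ v := by
  have hc : Commute H (1 - H) := (Commute.one_right H).sub_right (Commute.refl H)
  have hB : aeval H ((X : ℝ[X]) * (1 - X) ^ r) = H * (1 - H) ^ r := by
    simp [_root_.map_mul, map_pow, map_sub, _root_.map_one, aeval_X]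
  have hBsym : (H * (1 - H) ^ r)ᵀ = H * (1 - H) ^ r := by
    rw [transpose_mul, transpose_pow, transpose_sub, transpose_one, hH,
      ← (hc.pow_right r).eq]
  have key : aeval H q = (H * (1 - H) ^ r)ᵀ * Y * (H * (1 - H) ^ r) := by
    rw [hq, _root_.map_mul, _root_.map_mul, hB, hBsym, hp]
  rw [key, conj_dot]
  exact hY _

private lemma term_nonneg (H : Matrix n n ℝ) (hH : Hᵀ = H)
    (h0 : ∀ v : n → ℝ, 0 ≤ (H *ᵥ v) ⬝ᵥ v)
    (h1 : ∀ v : n → ℝ, (H *ᵥ v) ⬝ᵥ (H *ᵥ v) ≤ (H *ᵥ v) ⬝ᵥ v)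
    (m : ℕ) (v : n → ℝ) : 0 ≤ ((H ^ 3 * (1 - H) ^ m) *ᵥ v) ⬝ᵥ v := by
  have hHH : ∀ w : n → ℝ, 0 ≤ ((H - H * H) *ᵥ w) ⬝ᵥ w := by
    intro w
    have e : ((H - H * H) *ᵥ w) ⬝ᵥ w = (H *ᵥ w) ⬝ᵥ w - (H *ᵥ w) ⬝ᵥ (H *ᵥ w) := by
      rw [sub_mulVec, sub_dotProduct, ← mulVec_mulVec]
      congr 1
      rw [dotProduct_comm, dotProduct_mulVec, ← mulVec_transpose, hH, dotProduct_comm]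
    rw [e]
    linarith [h1 w]
  have hgen : H ^ 3 * (1 - H) ^ m = aeval H ((X : ℝ[X]) ^ 3 * (1 - X) ^ m) := by
    simp [_root_.map_mul, map_pow, map_sub, _root_.map_one, aeval_X]
  rw [hgen]
  rcases Nat.even_or_odd m with ⟨r, hr⟩ | ⟨r, hr⟩
  · exact aux_sandwich H hH H h0 r X (by simp) _
      (by rw [hr]; ring) v
  · exact aux_sandwich H hH (H - H * H) hHH r (X - X * X)
      (by simp [map_sub, _root_.map_mul, aeval_X]) _
      (by rw [hr]; ring) v
private lemma sum_mulVec_dot {ι : Type*} (s : Finset ι) (F : ι → Matrix n n ℝ) (v : n → ℝ) :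
    ((∑ i ∈ s, F i) *ᵥ v) ⬝ᵥ v = ∑ i ∈ s, ((F i *ᵥ v) ⬝ᵥ v) := by
  classical
  induction s using Finset.induction with
  | empty => simp
  | insert a s hx ih => simp [Finset.sum_insert hx, add_mulVec, add_dotProduct, ih]

private lemma natCast_mul_mulVec_dot (c : ℕ) (M : Matrix n n ℝ) (v : n → ℝ) :
    (((c : Matrix n n ℝ) * M) *ᵥ v) ⬝ᵥ v = (c : ℝ) * ((M *ᵥ v) ⬝ᵥ v) := by
  rw [← nsmul_eq_mul, ← Nat.cast_smul_eq_nsmul ℝ, smul_mulVec, smul_dotProduct,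
    smul_eq_mul]

private lemma Q_nonneg (H : Matrix n n ℝ) (hH : Hᵀ = H)
    (h0 : ∀ v : n → ℝ, 0 ≤ (H *ᵥ v) ⬝ᵥ v)
    (h1 : ∀ v : n → ℝ, (H *ᵥ v) ⬝ᵥ (H *ᵥ v) ≤ (H *ᵥ v) ⬝ᵥ v)
    (L : ℕ) (v : n → ℝ) :
    (L : ℝ) * (((H ^ 2 * (1 - H) ^ L) *ᵥ v) ⬝ᵥ v) ≤ ((H - H * (1 - H) ^ L) *ᵥ v) ⬝ᵥ v := by
  have hid := matrix_id H L
  have e : H - H * (1 - H) ^ L =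
      (L : Matrix n n ℝ) * (H ^ 2 * (1 - H) ^ L) +
        ∑ m ∈ Finset.range L, ((m : Matrix n n ℝ) + 1) * (H ^ 3 * (1 - H) ^ m) := by
    rw [← hid]; abel
  rw [e, add_mulVec, add_dotProduct, natCast_mul_mulVec_dot]
  have hsum : 0 ≤ ((∑ m ∈ Finset.range L, ((m : Matrix n n ℝ) + 1) * (H ^ 3 * (1 - H) ^ m)) *ᵥ v) ⬝ᵥ v := by
    rw [sum_mulVec_dot]
    apply Finset.sum_nonneg
    intro m _
    have : ((m : Matrix n n ℝ) + 1) = ((m + 1 : ℕ) : Matrix n n ℝ) := by push_cast; ring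
    rw [this, natCast_mul_mulVec_dot]
    have ht := term_nonneg H hH h0 h1 m v
    positivity
  linarith
private lemma smooth_bound (A1 : Matrix n n ℝ) (hA1 : A1.PosDef) (ω : ℝ) (hω : 0 < ω)
    (hup : ∀ v : n → ℝ, ((ω • (diagonal fun i => (A1 i i)⁻¹)) *ᵥ v) ⬝ᵥ v ≤ (A1⁻¹ *ᵥ v) ⬝ᵥ v)
    (l : ℕ) (v : n → ℝ) :
    2 * (l : ℝ) * ω *
        (((diagonal fun i => (A1 i i)⁻¹) *ᵥ
            (A1 *ᵥ ((1 - (ω • (diagonal fun i => (A1 i i)⁻¹)) * A1) ^ l *ᵥ v))) ⬝ᵥ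
          (A1 *ᵥ ((1 - (ω • (diagonal fun i => (A1 i i)⁻¹)) * A1) ^ l *ᵥ v))) ≤
      (A1 *ᵥ v) ⬝ᵥ v -
        (A1 *ᵥ ((1 - (ω • (diagonal fun i => (A1 i i)⁻¹)) * A1) ^ l *ᵥ v)) ⬝ᵥ
          ((1 - (ω • (diagonal fun i => (A1 i i)⁻¹)) * A1) ^ l *ᵥ v) := by
  have hA1sym : A1ᵀ = A1 := by
    rw [← conjTranspose_eq_transpose_of_trivial]; exact hA1.1
  have hdet : IsUnit A1.det := hA1.det_pos.ne'.isUnit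
  obtain ⟨hRsym, hRisym, hRRi, hRiR, hS⟩ := sqrt_facts A1 ω hω (diag_pos A1 hA1)
  set R : Matrix n n ℝ := diagonal fun i => Real.sqrt (ω * (A1 i i)⁻¹) with hRdef
  set Ri : Matrix n n ℝ := diagonal fun i => (Real.sqrt (ω * (A1 i i)⁻¹))⁻¹ with hRidef
  set Dinv : Matrix n n ℝ := diagonal fun i => (A1 i i)⁻¹ with hDinv
  set S : Matrix n n ℝ := ω • Dinv with hSdef
  have hS' : S = R * R := hS.symm
  have hc1 : ∀ X : Matrix n n ℝ, Ri * (R * X) = X := fun X => by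
    rw [← Matrix.mul_assoc, hRiR, Matrix.one_mul]
  have hc2 : ∀ X : Matrix n n ℝ, R * (Ri * X) = X := fun X => by
    rw [← Matrix.mul_assoc, hRRi, Matrix.one_mul]
  set H : Matrix n n ℝ := R * A1 * R with hH
  have hHsym : Hᵀ = H := by
    rw [hH, transpose_mul, transpose_mul, hRsym, hA1sym, Matrix.mul_assoc]
  have hcom : Commute H (1 - H) := (Commute.one_right H).sub_right (Commute.refl H)
  have hK : 1 - S * A1 = R * (1 - H) * Ri := by
    rw [Matrix.mul_sub, Matrix.mul_one, Matrix.sub_mul, hRRi, hH, hS']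
    congr 1
    simp only [Matrix.mul_assoc, hc1, hc2, hRRi, hRiR, Matrix.mul_one, Matrix.one_mul]
  have hKl : (1 - S * A1) ^ l = R * (1 - H) ^ l * Ri := by
    rw [hK, mg_conj_pow R Ri _ hRRi hRiR]
  have hKlT : ((1 - S * A1) ^ l)ᵀ = Ri * (1 - H) ^ l * R := by
    rw [hKl, transpose_mul, transpose_mul, hRsym, hRisym, transpose_pow, transpose_sub,
      transpose_one, hHsym, Matrix.mul_assoc]
  have hA1H : A1 = Ri * H * Ri := by
    rw [hH]
    simp only [Matrix.mul_assoc, hc1, hc2, hRRi, hRiR, Matrix.mul_one, Matrix.one_mul]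
  have hmerge : (1 - H) ^ l * H * (1 - H) ^ l = H * (1 - H) ^ (2 * l) := by
    rw [← (hcom.pow_right l).eq, Matrix.mul_assoc, ← pow_add, two_mul]
  have hmerge2 : (1 - H) ^ l * (H * H) * (1 - H) ^ l = H ^ 2 * (1 - H) ^ (2 * l) := by
    have h2 : Commute (H ^ 2) ((1 - H) ^ (2 * l)) := (hcom.pow_pow 2 (2 * l))
    calc (1 - H) ^ l * (H * H) * (1 - H) ^ l
        = (1 - H) ^ l * H ^ 2 * (1 - H) ^ l := by rw [pow_two]
      _ = H ^ 2 * (1 - H) ^ (2 * l) := by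
          rw [← (hcom.pow_pow 2 l).eq, Matrix.mul_assoc, ← pow_add, two_mul]
  have I1 : ((1 - S * A1) ^ l)ᵀ * A1 * ((1 - S * A1) ^ l) = Ri * (H * (1 - H) ^ (2 * l)) * Ri := by
    rw [hKlT, hKl]
    conv_lhs => rw [hA1H]
    rw [← hmerge]
    simp only [Matrix.mul_assoc, hc1, hc2, hRRi, hRiR, Matrix.mul_one, Matrix.one_mul]
  have I2 : ((1 - S * A1) ^ l)ᵀ * (A1 * S * A1) * ((1 - S * A1) ^ l)
      = Ri * (H ^ 2 * (1 - H) ^ (2 * l)) * Ri := by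
    have hASA : A1 * S * A1 = Ri * (H * H) * Ri := by
      rw [hS']
      conv_lhs => rw [hA1H]
      simp only [Matrix.mul_assoc, hc1, hc2, hRRi, hRiR, Matrix.mul_one, Matrix.one_mul]
    rw [hKlT, hKl, hASA, ← hmerge2]
    simp only [Matrix.mul_assoc, hc1, hc2, hRRi, hRiR, Matrix.mul_one, Matrix.one_mul]
  have h0 : ∀ u : n → ℝ, 0 ≤ (H *ᵥ u) ⬝ᵥ u := by
    intro u
    have e : H = Rᵀ * A1 * R := by rw [hRsym, hH]
    rw [e, conj_dot]
    exact psd_dot A1 hA1 _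
  have h1 : ∀ u : n → ℝ, (H *ᵥ u) ⬝ᵥ (H *ᵥ u) ≤ (H *ᵥ u) ⬝ᵥ u := by
    intro u
    have h := hup (A1 *ᵥ (R *ᵥ u))
    have e1 : S *ᵥ (A1 *ᵥ (R *ᵥ u)) = R *ᵥ (H *ᵥ u) := by
      rw [hS']
      simp only [mulVec_mulVec]
      congr 1
      rw [hH]
      simp only [Matrix.mul_assoc]
    have e2 : (R *ᵥ (H *ᵥ u)) ⬝ᵥ (A1 *ᵥ (R *ᵥ u)) = (H *ᵥ u) ⬝ᵥ (H *ᵥ u) := by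
      rw [mulVec_dot_left, hRsym, mulVec_mulVec, mulVec_mulVec, ← hH]
    have e3 : A1⁻¹ *ᵥ (A1 *ᵥ (R *ᵥ u)) = R *ᵥ u := by
      rw [mulVec_mulVec, nonsing_inv_mul _ hdet, one_mulVec]
    have e4 : (R *ᵥ u) ⬝ᵥ (A1 *ᵥ (R *ᵥ u)) = (H *ᵥ u) ⬝ᵥ u := by
      rw [dotProduct_comm, ← conj_dot R A1 u, hRsym, ← hH]
    rw [e1, e2, e3, e4] at h
    exact h
  set Kl : Matrix n n ℝ := (1 - S * A1) ^ l with hKldef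
  set w : n → ℝ := Kl *ᵥ v with hw
  set u : n → ℝ := Ri *ᵥ v with hu
  have ha_v : (A1 *ᵥ v) ⬝ᵥ v = (H *ᵥ u) ⬝ᵥ u := by
    conv_lhs => rw [hA1H]
    rw [show Ri * H * Ri = Riᵀ * H * Ri from by rw [hRisym], conj_dot, ← hu]
  have ha_w : (A1 *ᵥ w) ⬝ᵥ w = ((H * (1 - H) ^ (2 * l)) *ᵥ u) ⬝ᵥ u := by
    rw [hw, ← conj_dot Kl A1 v, I1,
      show Ri * (H * (1 - H) ^ (2 * l)) * Ri = Riᵀ * (H * (1 - H) ^ (2 * l)) * Ri from by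
        rw [hRisym], conj_dot, ← hu]
  have hd : (S *ᵥ (A1 *ᵥ w)) ⬝ᵥ (A1 *ᵥ w) = ((H ^ 2 * (1 - H) ^ (2 * l)) *ᵥ u) ⬝ᵥ u := by
    have e : (S *ᵥ (A1 *ᵥ w)) ⬝ᵥ (A1 *ᵥ w) = ((A1ᵀ * S * A1) *ᵥ w) ⬝ᵥ w := by
      rw [conj_dot]
    rw [e, hA1sym, hw, ← conj_dot Kl (A1 * S * A1) v, I2,
      show Ri * (H ^ 2 * (1 - H) ^ (2 * l)) * Ri = Riᵀ * (H ^ 2 * (1 - H) ^ (2 * l)) * Ri from by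
        rw [hRisym], conj_dot, ← hu]
  have hQ := Q_nonneg H hHsym h0 h1 (2 * l) u
  have hsub : ((H - H * (1 - H) ^ (2 * l)) *ᵥ u) ⬝ᵥ u
      = (H *ᵥ u) ⬝ᵥ u - ((H * (1 - H) ^ (2 * l)) *ᵥ u) ⬝ᵥ u := by
    rw [sub_mulVec, sub_dotProduct]
  rw [hsub] at hQ
  push_cast at hQ
  have hfin : 2 * (l : ℝ) * ω * ((Dinv *ᵥ (A1 *ᵥ w)) ⬝ᵥ (A1 *ᵥ w))
      = 2 * (l : ℝ) * ((S *ᵥ (A1 *ᵥ w)) ⬝ᵥ (A1 *ᵥ w)) := by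
    rw [hSdef, smul_mulVec, smul_dotProduct, smul_eq_mul]
    ring
  rw [hfin, hd, ha_v, ha_w]
  linarith [hQ]

private lemma vcycle_step {n0 n1 : Type*} [Fintype n0] [DecidableEq n0]
    [Fintype n1] [DecidableEq n1] (A0 : Matrix n0 n0 ℝ) (A1 : Matrix n1 n1 ℝ) (Pm : Matrix n1 n0 ℝ)
    (B0 : Matrix n0 n0 ℝ) (ω m0 : ℝ) (l : ℕ) (hω : 0 < ω) (hl : 0 < l) (hm0 : 0 < m0)
    (hA0 : A0.PosDef) (hA1 : A1.PosDef)
    (hGal : A0 = ((1 / 2 : ℝ) • Pmᵀ) * A1 * Pm)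
    (hup : ∀ v : n1 → ℝ, ((ω • (diagonal fun i => (A1 i i)⁻¹)) *ᵥ v) ⬝ᵥ v ≤ (A1⁻¹ *ᵥ v) ⬝ᵥ v)
    (happ : ∀ v : n1 → ℝ,
      (A1 *ᵥ ((1 - Pm * A0⁻¹ * ((1 / 2 : ℝ) • Pmᵀ) * A1) *ᵥ v)) ⬝ᵥ
        ((1 - Pm * A0⁻¹ * ((1 / 2 : ℝ) • Pmᵀ) * A1) *ᵥ v) ≤
      m0 * (((diagonal fun i => (A1 i i)⁻¹) *ᵥ (A1 *ᵥ v)) ⬝ᵥ (A1 *ᵥ v)))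
    (hB0sym : B0ᵀ = B0)
    (h0M0 : ∀ v : n0 → ℝ, 0 ≤ ((A0 * (1 - B0 * A0)) *ᵥ v) ⬝ᵥ v)
    (h1M0 : ∀ v : n0 → ℝ, ((A0 * (1 - B0 * A0)) *ᵥ v) ⬝ᵥ v ≤
      (m0 / (2 * (l : ℝ) * ω + m0)) * ((A0 *ᵥ v) ⬝ᵥ v))
    (B1 : Matrix n1 n1 ℝ)
    (hB1 : B1 = (1 - (1 - (ω • (diagonal fun i => (A1 i i)⁻¹)) * A1) ^ l *
        (1 - Pm * B0 * ((1 / 2 : ℝ) • Pmᵀ) * A1) *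
        (1 - (ω • (diagonal fun i => (A1 i i)⁻¹)) * A1) ^ l) * A1⁻¹) :
    B1ᵀ = B1 ∧ (∀ v : n1 → ℝ, 0 ≤ ((A1 * (1 - B1 * A1)) *ᵥ v) ⬝ᵥ v) ∧
      (∀ v : n1 → ℝ, ((A1 * (1 - B1 * A1)) *ᵥ v) ⬝ᵥ v ≤
        (m0 / (2 * (l : ℝ) * ω + m0)) * ((A1 *ᵥ v) ⬝ᵥ v)) := by
  have hA1sym : A1ᵀ = A1 := by
    rw [← conjTranspose_eq_transpose_of_trivial]; exact hA1.1
  have hA0sym : A0ᵀ = A0 := by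
    rw [← conjTranspose_eq_transpose_of_trivial]; exact hA0.1
  have hdet1 : IsUnit A1.det := hA1.det_pos.ne'.isUnit
  have hdet0 : IsUnit A0.det := hA0.det_pos.ne'.isUnit
  have hinv1 : A1⁻¹ * A1 = 1 := nonsing_inv_mul _ hdet1
  have hinv1' : A1 * A1⁻¹ = 1 := mul_nonsing_inv _ hdet1
  have hinv0 : A0⁻¹ * A0 = 1 := nonsing_inv_mul _ hdet0
  have hinv0' : A0 * A0⁻¹ = 1 := mul_nonsing_inv _ hdet0
  have hinv1sym : (A1⁻¹)ᵀ = A1⁻¹ := by rw [transpose_nonsing_inv, hA1sym]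
  have hsmall := smooth_bound A1 hA1 ω hω hup l
  set δ : ℝ := m0 / (2 * (l : ℝ) * ω + m0) with hδdef
  have hlpos : (0:ℝ) < l := by exact_mod_cast hl
  have hcpos : 0 < 2 * (l : ℝ) * ω + m0 := by nlinarith
  have hδ0 : 0 ≤ δ := by positivity
  have hδle1 : δ ≤ 1 := by rw [hδdef, div_le_one hcpos]; nlinarith
  have hδkey : (1 - δ) * m0 = 2 * (l : ℝ) * ω * δ := by
    rw [hδdef]; field_simp; ring
  set Dinv : Matrix n1 n1 ℝ := diagonal fun i => (A1 i i)⁻¹ with hDinvdef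
  set S : Matrix n1 n1 ℝ := ω • Dinv with hSdef
  set Ksm : Matrix n1 n1 ℝ := 1 - S * A1 with hKsmdef
  set Rm : Matrix n0 n1 ℝ := (1 / 2 : ℝ) • Pmᵀ with hRmdef
  set Cc : Matrix n1 n1 ℝ := 1 - Pm * B0 * Rm * A1 with hCcdef
  set G : Matrix n0 n1 ℝ := A0⁻¹ * (Rm * A1) with hGdef
  set M0 : Matrix n0 n0 ℝ := A0 * (1 - B0 * A0) with hM0def
  clear_value Dinv S Ksm Rm Cc G M0
  have hSsym : Sᵀ = S := by rw [hSdef, transpose_smul, hDinvdef, diagonal_transpose]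
  -- Galerkin facts
  have hGPm : G * Pm = 1 := by
    rw [hGdef, Matrix.mul_assoc, ← hGal, hinv0]
  have hRmA1 : Rm * A1 = A0 * G := by
    rw [hGdef, ← Matrix.mul_assoc, hinv0', Matrix.one_mul]
  have hA1Pm : A1 * Pm = (2 : ℝ) • (Gᵀ * A0) := by
    have h1 : (Rm * A1)ᵀ = (1 / 2 : ℝ) • (A1 * Pm) := by
      rw [transpose_mul, hRmdef, transpose_smul, transpose_transpose, hA1sym,
        Matrix.mul_smul]
    have h2 : (Rm * A1)ᵀ = Gᵀ * A0 := by rw [hRmA1, transpose_mul, hA0sym]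
    calc A1 * Pm = (2 : ℝ) • ((1 / 2 : ℝ) • (A1 * Pm)) := by
          rw [smul_smul]; norm_num
      _ = (2 : ℝ) • (Gᵀ * A0) := by rw [← h1, h2]
  have hCc : Cc = (1 - Pm * G) + Pm * (1 - B0 * A0) * G := by
    have e1 : Pm * (1 - B0 * A0) * G = Pm * G - Pm * B0 * Rm * A1 := by
      rw [Matrix.mul_sub, Matrix.mul_one, Matrix.sub_mul]
      congr 1
      simp only [Matrix.mul_assoc, hRmA1]
    rw [hCcdef, e1]; abel
  have hPmG : (Pm * G) * (Pm * G) = Pm * G := by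
    rw [Matrix.mul_assoc, ← Matrix.mul_assoc G Pm G, hGPm, Matrix.one_mul]
  have hAproj : A1 * (Pm * G) = (2 : ℝ) • (Gᵀ * A0 * G) := by
    rw [← Matrix.mul_assoc, hA1Pm, Matrix.smul_mul, Matrix.mul_assoc]
  have hAprojsym : (A1 * (Pm * G))ᵀ = A1 * (Pm * G) := by
    rw [hAproj, transpose_smul, transpose_mul, transpose_mul, transpose_transpose,
      hA0sym, ← Matrix.mul_assoc]
  have hATsym : (A1 * (1 - Pm * G))ᵀ = A1 * (1 - Pm * G) := by
    rw [Matrix.mul_sub, Matrix.mul_one, transpose_sub, hA1sym, hAprojsym]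
  have hTAT : (1 - Pm * G)ᵀ * A1 * (1 - Pm * G) = A1 * (1 - Pm * G) := by
    have h1 : (1 - Pm * G)ᵀ * A1 = A1 * (1 - Pm * G) := by
      conv_lhs => rw [← hA1sym, ← transpose_mul]
      rw [hATsym]
    have e2 : (1 - Pm * G) * (1 - Pm * G) = 1 - Pm * G := by
      have e : (1 - Pm * G) * (1 - Pm * G) = 1 - Pm * G - (Pm * G - (Pm * G) * (Pm * G)) := by
        noncomm_ring
      rw [e, hPmG, sub_self, sub_zero]
    rw [h1, Matrix.mul_assoc, e2]
  have hT0 : (1 : Matrix n1 n1 ℝ) - Pm * A0⁻¹ * Rm * A1 = 1 - Pm * G := by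
    congr 1
    rw [hGdef]
    simp only [Matrix.mul_assoc]
  -- commutation of A1 past Ksm powers
  have hstep : A1 * Ksm = Ksmᵀ * A1 := by
    rw [hKsmdef, Matrix.mul_sub, Matrix.mul_one, transpose_sub, transpose_one,
      Matrix.sub_mul, Matrix.one_mul, transpose_mul, hSsym, hA1sym]
    simp only [Matrix.mul_assoc]
  have hAKl : ∀ j : ℕ, A1 * Ksm ^ j = (Ksm ^ j)ᵀ * A1 := by
    intro j
    induction j with
    | zero => simp
    | succ k ih =>
      rw [pow_succ, ← Matrix.mul_assoc, ih, Matrix.mul_assoc, hstep, ← Matrix.mul_assoc,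
        ← transpose_mul, ← pow_succ', ← pow_succ]
  have hE : A1 * (Ksm ^ l * Cc * Ksm ^ l) = (Ksm ^ l)ᵀ * (A1 * Cc) * Ksm ^ l := by
    simp only [← Matrix.mul_assoc]
    rw [hAKl]
  have hACc : A1 * Cc = A1 * (1 - Pm * G) + (2 : ℝ) • (Gᵀ * M0 * G) := by
    rw [hCc, Matrix.mul_add]
    congr 1
    calc A1 * (Pm * (1 - B0 * A0) * G)
        = (A1 * Pm) * ((1 - B0 * A0) * G) := by simp only [Matrix.mul_assoc]
      _ = ((2 : ℝ) • (Gᵀ * A0)) * ((1 - B0 * A0) * G) := by rw [hA1Pm]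
      _ = (2 : ℝ) • (Gᵀ * M0 * G) := by
          rw [Matrix.smul_mul, hM0def]
          congr 1
          simp only [Matrix.mul_assoc]
  have hM0sym : M0ᵀ = M0 := by
    have e : M0 = A0 - A0 * B0 * A0 := by
      rw [hM0def, Matrix.mul_sub, Matrix.mul_one, Matrix.mul_assoc]
    rw [e, transpose_sub, hA0sym, transpose_mul, transpose_mul, hA0sym, hB0sym,
      Matrix.mul_assoc]
  have hACcsym : (A1 * Cc)ᵀ = A1 * Cc := by
    rw [hACc, transpose_add, hATsym, transpose_smul, transpose_mul, transpose_mul,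
      transpose_transpose, hM0sym, Matrix.mul_assoc]
  -- key dot product decomposition
  have key : ∀ v : n1 → ℝ,
      ((A1 * (Ksm ^ l * Cc * Ksm ^ l)) *ᵥ v) ⬝ᵥ v =
        (A1 *ᵥ ((1 - Pm * G) *ᵥ (Ksm ^ l *ᵥ v))) ⬝ᵥ ((1 - Pm * G) *ᵥ (Ksm ^ l *ᵥ v)) +
          2 * ((M0 *ᵥ (G *ᵥ (Ksm ^ l *ᵥ v))) ⬝ᵥ (G *ᵥ (Ksm ^ l *ᵥ v))) := by
    intro v
    rw [hE, conj_dot, hACc, add_mulVec, add_dotProduct]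
    congr 1
    · rw [← hTAT, conj_dot]
    · rw [smul_mulVec, smul_dotProduct, smul_eq_mul]
      congr 1
      exact conj_dot G M0 _
  have pyth : ∀ v : n1 → ℝ,
      (A1 *ᵥ (Ksm ^ l *ᵥ v)) ⬝ᵥ (Ksm ^ l *ᵥ v) =
        (A1 *ᵥ ((1 - Pm * G) *ᵥ (Ksm ^ l *ᵥ v))) ⬝ᵥ ((1 - Pm * G) *ᵥ (Ksm ^ l *ᵥ v)) +
          2 * ((A0 *ᵥ (G *ᵥ (Ksm ^ l *ᵥ v))) ⬝ᵥ (G *ᵥ (Ksm ^ l *ᵥ v))) := by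
    intro v
    have e : A1 = A1 * (1 - Pm * G) + A1 * (Pm * G) := by
      rw [← Matrix.mul_add]; simp
    conv_lhs => rw [show A1 *ᵥ (Ksm ^ l *ᵥ v) = (A1 * (1 - Pm * G) + A1 * (Pm * G)) *ᵥ (Ksm ^ l *ᵥ v) from by rw [← e]]
    rw [add_mulVec, add_dotProduct]
    congr 1
    · rw [← hTAT, conj_dot]
    · rw [hAproj, smul_mulVec, smul_dotProduct, smul_eq_mul]
      congr 1
      exact conj_dot G A0 _
  have hEq : 1 - B1 * A1 = Ksm ^ l * Cc * Ksm ^ l := by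
    rw [hB1]
    have e : (1 - Ksm ^ l * Cc * Ksm ^ l) * A1⁻¹ * A1 = 1 - Ksm ^ l * Cc * Ksm ^ l := by
      rw [Matrix.mul_assoc, hinv1, Matrix.mul_one]
    rw [e, sub_sub_cancel]
  -- positivity of Dinv
  have hDpd : Dinv.PosDef := by
    rw [hDinvdef]
    exact Matrix.PosDef.diagonal fun i => by
      have := diag_pos A1 hA1 i; positivity
  refine ⟨?_, ?_, ?_⟩
  · -- symmetry of B1
    have hM1sym : (A1 * (Ksm ^ l * Cc * Ksm ^ l))ᵀ = A1 * (Ksm ^ l * Cc * Ksm ^ l) := by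
      rw [hE, transpose_mul, transpose_mul, transpose_transpose, hACcsym,
        ← Matrix.mul_assoc]
    have hB1' : B1 = A1⁻¹ - A1⁻¹ * (A1 * (Ksm ^ l * Cc * Ksm ^ l)) * A1⁻¹ := by
      rw [hB1, Matrix.sub_mul, Matrix.one_mul]
      rw [← Matrix.mul_assoc A1⁻¹ A1, hinv1, Matrix.one_mul]
    rw [hB1', transpose_sub, hinv1sym, transpose_mul, transpose_mul, hinv1sym,
      hM1sym, ← Matrix.mul_assoc]
  · -- nonnegativity
    intro v
    rw [hEq, key v]
    have t1 : 0 ≤ (A1 *ᵥ ((1 - Pm * G) *ᵥ (Ksm ^ l *ᵥ v))) ⬝ᵥ ((1 - Pm * G) *ᵥ (Ksm ^ l *ᵥ v)) :=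
      psd_dot A1 hA1 _
    have t2 := h0M0 (G *ᵥ (Ksm ^ l *ᵥ v))
    linarith
  · -- the contraction bound
    intro v
    rw [hEq, key v]
    set w : n1 → ℝ := Ksm ^ l *ᵥ v with hw
    set z : n0 → ℝ := G *ᵥ w with hz
    have happ' := happ w
    rw [hT0] at happ'
    have hsm := hsmall v
    rw [← hw] at hsm
    have hpyth := pyth v
    have hM0z := h1M0 z
    have hM0z0 := h0M0 z
    have ht0 : 0 ≤ (A1 *ᵥ ((1 - Pm * G) *ᵥ w)) ⬝ᵥ ((1 - Pm * G) *ᵥ w) := psd_dot A1 hA1 _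
    have hdI0 : 0 ≤ (Dinv *ᵥ (A1 *ᵥ w)) ⬝ᵥ (A1 *ᵥ w) := psd_dot Dinv hDpd _
    have h2 : (1 - δ) * ((A1 *ᵥ ((1 - Pm * G) *ᵥ w)) ⬝ᵥ ((1 - Pm * G) *ᵥ w))
        ≤ (1 - δ) * (m0 * ((Dinv *ᵥ (A1 *ᵥ w)) ⬝ᵥ (A1 *ᵥ w))) :=
      mul_le_mul_of_nonneg_left happ' (by linarith)
    have h3 : (1 - δ) * (m0 * ((Dinv *ᵥ (A1 *ᵥ w)) ⬝ᵥ (A1 *ᵥ w)))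
        = δ * (2 * (l : ℝ) * ω * ((Dinv *ᵥ (A1 *ᵥ w)) ⬝ᵥ (A1 *ᵥ w))) := by
      rw [← mul_assoc, hδkey]; ring
    have hmul : δ * (2 * (l : ℝ) * ω * ((Dinv *ᵥ (A1 *ᵥ w)) ⬝ᵥ (A1 *ᵥ w)))
        ≤ δ * ((A1 *ᵥ v) ⬝ᵥ v - (A1 *ᵥ w) ⬝ᵥ w) :=
      mul_le_mul_of_nonneg_left hsm hδ0
    have c2 : (A1 *ᵥ ((1 - Pm * G) *ᵥ w)) ⬝ᵥ ((1 - Pm * G) *ᵥ w)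
          + 2 * (δ * ((A0 *ᵥ z) ⬝ᵥ z))
        = (1 - δ) * ((A1 *ᵥ ((1 - Pm * G) *ᵥ w)) ⬝ᵥ ((1 - Pm * G) *ᵥ w))
          + δ * ((A1 *ᵥ w) ⬝ᵥ w) := by
      rw [hpyth]; ring
    have c6 : δ * ((A1 *ᵥ v) ⬝ᵥ v - (A1 *ᵥ w) ⬝ᵥ w) + δ * ((A1 *ᵥ w) ⬝ᵥ w)
        = δ * ((A1 *ᵥ v) ⬝ᵥ v) := by ring
    linarith [hM0z, c2, h2, h3, hmul, c6]
end MGaux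

/-- The V-cycle multigrid operator `B_k` (as an approximate inverse of `A_k`), with exact
solve on the coarsest level `0`, damped Jacobi smoother `S_k = ω D_k⁻¹` applied `l` times
before and after coarse-grid correction, prolongations `P k` and restrictions
`(1/2)(P k)ᵀ`.  It is characterized by `B 0 = A 0⁻¹` and the error-propagation identity
`I - B_{k+1} A_{k+1} = K^l (I - P B_k R A_{k+1}) K^l` with `K = I - S A_{k+1}`. -/
noncomputable def vcycleB (dim : ℕ → ℕ) (A : ∀ k, Matrix (Fin (dim k)) (Fin (dim k)) ℝ)
    (P : ∀ k, Matrix (Fin (dim (k + 1))) (Fin (dim k)) ℝ) (ω : ℝ) (l : ℕ) :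
    ∀ k, Matrix (Fin (dim k)) (Fin (dim k)) ℝ
  | 0 => (A 0)⁻¹
  | k + 1 =>
      let Smat : Matrix (Fin (dim (k + 1))) (Fin (dim (k + 1))) ℝ :=
        ω • (Matrix.diagonal fun i => (A (k + 1) i i)⁻¹)
      let Ksm : Matrix (Fin (dim (k + 1))) (Fin (dim (k + 1))) ℝ := 1 - Smat * A (k + 1)
      (1 - Ksm ^ l *
          (1 - P k * vcycleB dim A P ω l k * ((1 / 2 : ℝ) • (P k)ᵀ) * A (k + 1)) *
          Ksm ^ l) * (A (k + 1))⁻¹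

/-- V-cycle multigrid convergence (Bramble–Pasciak/Xu): if each `A_k` is symmetric positive
definite with Galerkin coarsening `A_k = (1/2)(P k)ᵀ A_{k+1} P k`, the smoother
`S_k = ω D_k⁻¹` satisfies `(ω/λ_max(A_k))(v,v) ≤ (S_k v, v) ≤ (A_k⁻¹ v, v)`, and the
coarse-grid correction `T` satisfies `‖T v‖²_{A} ≤ m₀‖A v‖²_{D⁻¹}`, then the V-cycle
operator `B_k` with `l` smoothing steps satisfies
`‖I - B_k A_k‖_{A_k} ≤ m₀/(2lω + m₀) < 1` for every level `k`. -/
theorem vcycle_uniform_convergence (dim : ℕ → ℕ)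
    (A : ∀ k, Matrix (Fin (dim k)) (Fin (dim k)) ℝ)
    (P : ∀ k, Matrix (Fin (dim (k + 1))) (Fin (dim k)) ℝ)
    (ω m0 : ℝ) (l : ℕ) (hω : 0 < ω) (hl : 0 < l) (hm0 : 0 < m0)
    (hA : ∀ k, (A k).PosDef)
    (hGal : ∀ k, A k = ((1 / 2 : ℝ) • (P k)ᵀ) * A (k + 1) * P k)
    (hsmooth : ∀ k (v : Fin (dim k) → ℝ),
      (ω / (⨆ i, (hA k).1.eigenvalues i)) * (v ⬝ᵥ v) ≤
          ((ω • (Matrix.diagonal fun i => (A k i i)⁻¹)) *ᵥ v) ⬝ᵥ v ∧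
        ((ω • (Matrix.diagonal fun i => (A k i i)⁻¹)) *ᵥ v) ⬝ᵥ v ≤ ((A k)⁻¹ *ᵥ v) ⬝ᵥ v)
    (happrox : ∀ k (v : Fin (dim (k + 1)) → ℝ),
      (A (k + 1) *ᵥ
          ((1 - P k * (A k)⁻¹ * ((1 / 2 : ℝ) • (P k)ᵀ) * A (k + 1)) *ᵥ v)) ⬝ᵥ
          ((1 - P k * (A k)⁻¹ * ((1 / 2 : ℝ) • (P k)ᵀ) * A (k + 1)) *ᵥ v) ≤
        m0 * (((Matrix.diagonal fun i => (A (k + 1) i i)⁻¹) *ᵥ (A (k + 1) *ᵥ v)) ⬝ᵥ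
          (A (k + 1) *ᵥ v))) :
    m0 / (2 * l * ω + m0) < 1 ∧
      ∀ k (v : Fin (dim k) → ℝ),
        (A k *ᵥ ((1 - vcycleB dim A P ω l k * A k) *ᵥ v)) ⬝ᵥ
            ((1 - vcycleB dim A P ω l k * A k) *ᵥ v) ≤
          (m0 / (2 * l * ω + m0)) ^ 2 * ((A k *ᵥ v) ⬝ᵥ v) := by
  have hlpos : (0:ℝ) < l := by exact_mod_cast hl
  have hcpos : 0 < 2 * (l:ℝ) * ω + m0 := by nlinarith
  have hδ0 : 0 ≤ m0 / (2 * (l:ℝ) * ω + m0) := by positivity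
  constructor
  · rw [div_lt_one hcpos]; nlinarith
  · have ind : ∀ k, (vcycleB dim A P ω l k)ᵀ = vcycleB dim A P ω l k ∧
        (∀ v : Fin (dim k) → ℝ,
          0 ≤ ((A k * (1 - vcycleB dim A P ω l k * A k)) *ᵥ v) ⬝ᵥ v) ∧
        (∀ v : Fin (dim k) → ℝ,
          ((A k * (1 - vcycleB dim A P ω l k * A k)) *ᵥ v) ⬝ᵥ v ≤
            (m0 / (2 * (l : ℝ) * ω + m0)) * ((A k *ᵥ v) ⬝ᵥ v)) := by
      intro k
      induction k with
      | zero =>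
        have hdet : IsUnit (A 0).det := (hA 0).det_pos.ne'.isUnit
        have hsym : (A 0)ᵀ = A 0 := by
          rw [← conjTranspose_eq_transpose_of_trivial]; exact (hA 0).1
        have hz : A 0 * (1 - vcycleB dim A P ω l 0 * A 0) = 0 := by
          show A 0 * (1 - (A 0)⁻¹ * A 0) = 0
          rw [nonsing_inv_mul _ hdet, sub_self, Matrix.mul_zero]
        refine ⟨?_, ?_, ?_⟩
        · show ((A 0)⁻¹)ᵀ = (A 0)⁻¹
          rw [transpose_nonsing_inv, hsym]
        · intro v; rw [hz]; simp
        · intro v; rw [hz]; simp only [zero_mulVec, zero_dotProduct]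
          exact mul_nonneg hδ0 (psd_dot _ (hA 0) v)
      | succ k ih =>
        exact vcycle_step (A k) (A (k+1)) (P k) (vcycleB dim A P ω l k) ω m0 l hω hl hm0
          (hA k) (hA (k+1)) (hGal k) (fun v => (hsmooth (k+1) v).2) (happrox k)
          ih.1 ih.2.1 ih.2.2 (vcycleB dim A P ω l (k+1)) rfl
    intro k v
    obtain ⟨hBsym, h0, h1⟩ := ind k
    have hAksym : (A k)ᵀ = A k := by
      rw [← conjTranspose_eq_transpose_of_trivial]; exact (hA k).1
    have hMsym : (A k * (1 - vcycleB dim A P ω l k * A k))ᵀ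
        = A k * (1 - vcycleB dim A P ω l k * A k) := by
      have e : A k * (1 - vcycleB dim A P ω l k * A k)
          = A k - A k * vcycleB dim A P ω l k * A k := by
        rw [Matrix.mul_sub, Matrix.mul_one, Matrix.mul_assoc]
      rw [e, transpose_sub, hAksym, transpose_mul, transpose_mul, hAksym, hBsym,
        Matrix.mul_assoc]
    set Bk := vcycleB dim A P ω l k with hBk
    set E : Matrix (Fin (dim k)) (Fin (dim k)) ℝ := 1 - Bk * A k with hEdef
    set M : Matrix (Fin (dim k)) (Fin (dim k)) ℝ := A k * E with hMdef
    have hX : A k *ᵥ (E *ᵥ v) = M *ᵥ v := by rw [hMdef, ← mulVec_mulVec]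
    have hcs := cs_aux M hMsym h0 v (E *ᵥ v)
    have b1 := h1 v
    have b2 := h1 (E *ᵥ v)
    rw [hX] at b2
    have n0' := h0 v
    have n1' := h0 (E *ᵥ v)
    have nq : 0 ≤ (A k *ᵥ v) ⬝ᵥ v := psd_dot _ (hA k) v
    have nX : 0 ≤ (M *ᵥ v) ⬝ᵥ (E *ᵥ v) := by
      rw [← hX]; exact psd_dot _ (hA k) _
    rw [hX]
    rcases eq_or_lt_of_le nX with h | h
    · rw [← h]
      exact mul_nonneg (pow_nonneg hδ0 2) nq
    · have step1 : ((M *ᵥ v) ⬝ᵥ (E *ᵥ v)) ^ 2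
          ≤ ((m0 / (2 * (l:ℝ) * ω + m0)) * ((A k *ᵥ v) ⬝ᵥ v)) *
            ((m0 / (2 * (l:ℝ) * ω + m0)) * ((M *ᵥ v) ⬝ᵥ (E *ᵥ v))) :=
        le_trans hcs (mul_le_mul b1 b2 n1' (mul_nonneg hδ0 nq))
      nlinarith [step1, h]
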